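/- Let π : X → Y be a quotient map from a metric space X whose closed balls are compact to a topological space Y, and fix L ≥ 1, α ∈ (0,1), a compact set K ⊆ X, a compact set K' ⊆ Y containing a fixed point y₀. Then the family {φ|_{K'} : φ is an intrinsically (L,α)-Hölder section of π with d(φ(y₁),φ(y₂)) ≤ L·d(φ(y₁),π⁻¹(y₂))^α, and φ(y₀) ∈ K} is equibounded: there exists a compact set in X containing φ(y) for all such φ and all y ∈ K'. Explicitly, for any x₀ ∈ K, d(x₀, φ(y)) ≤ diam(K) + L·max_{x∈K} d(π⁻¹(y), x)^α. -/
import Mathlib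


open Metric Set

/-- Equiboundedness: the family of restrictions to a compact `K' ⊆ Y` of intrinsically
`(L,α)`-Hölder sections with `φ y₀ ∈ K` is contained in a common compact set, with the
explicit bound `d(x₀, φ y) ≤ diam K + L · max_{x ∈ K} d(x, π⁻¹ y)^α`. -/
theorem stmt12 {X Y : Type*} [MetricSpace X] [ProperSpace X] [TopologicalSpace Y]
    (π : X → Y) (hπc : Continuous π) (hπo : IsOpenMap π) (hπs : Function.Surjective π)
    (L α : ℝ) (hL : 1 ≤ L) (hα : α ∈ Set.Ioo (0:ℝ) 1)
    (K : Set X) (hK : IsCompact K) (K' : Set Y) (hK' : IsCompact K')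
    (y₀ : Y) (hy₀ : y₀ ∈ K') :
    (∃ C : Set X, IsCompact C ∧ ∀ φ : Y → X, (∀ y, π (φ y) = y) →
      (∀ y₁ y₂ : Y, dist (φ y₁) (φ y₂) ≤ L * (infDist (φ y₁) (π ⁻¹' {y₂})) ^ α) →
      φ y₀ ∈ K → ∀ y ∈ K', φ y ∈ C) ∧
    (∀ x₀ ∈ K, ∀ φ : Y → X, (∀ y, π (φ y) = y) →
      (∀ y₁ y₂ : Y, dist (φ y₁) (φ y₂) ≤ L * (infDist (φ y₁) (π ⁻¹' {y₂})) ^ α) →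
      φ y₀ ∈ K → ∀ y ∈ K',
        dist x₀ (φ y) ≤ diam K + L * (⨆ x ∈ K, (infDist x (π ⁻¹' {y})) ^ α)) := by
  have hL0 : (0:ℝ) ≤ L := le_trans zero_le_one hL
  have hfib : ∀ y : Y, (π ⁻¹' {y}).Nonempty := fun y => (hπs y).imp fun x hx => by simp [hx]
  constructor
  · -- first part
    rcases K.eq_empty_or_nonempty with hKe | ⟨x', hx'⟩
    · exact ⟨∅, isCompact_empty, fun φ _ _ hφK => absurd hφK (by simp [hKe])⟩
    · -- local boundedness of g y := infDist x' (π⁻¹ {y}) on K'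
      set g : Y → ℝ := fun y => infDist x' (π ⁻¹' {y}) with hg
      have key : ∀ y : Y, {y' | g y' ≤ g y + 2} ∈ nhds y := by
        intro y
        obtain ⟨p, hp, hdp⟩ := (infDist_lt_iff (hfib y)).1 (lt_add_one (g y))
        have hU : π '' ball p 1 ∈ nhds y := by
          have : IsOpen (π '' ball p 1) := hπo _ isOpen_ball
          exact this.mem_nhds ⟨p, mem_ball_self one_pos, hp⟩
        refine Filter.mem_of_superset hU ?_
        rintro y' ⟨p', hp', rfl⟩
        have h1 : infDist x' (π ⁻¹' {π p'}) ≤ dist x' p' := infDist_le_dist_of_mem rfl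
        have : dist x' p' ≤ dist x' p + dist p p' := dist_triangle _ _ _
        have h2 : dist p p' ≤ 1 := le_of_lt (by rw [dist_comm]; exact mem_ball.mp hp')
        simp only [mem_setOf_eq, hg]
        linarith
      obtain ⟨t, -, hcov⟩ := hK'.elim_nhds_subcover (fun y => {y' | g y' ≤ g y + 2}) fun y _ => key y
      have hBdd : BddAbove ((fun y => g y + 2) '' (t : Set Y)) := (t.finite_toSet.image _).bddAbove
      obtain ⟨B, hB⟩ := hBdd
      have hBg : ∀ y ∈ K', g y ≤ B := by
        intro y hy
        obtain ⟨yi, hyi, hyle⟩ := by simpa using hcov hy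
        exact le_trans hyle (hB ⟨yi, hyi, rfl⟩)
      have hB0 : (0:ℝ) ≤ B := le_trans infDist_nonneg (hBg y₀ hy₀)
      refine ⟨closedBall x' (diam K + L * (diam K + B) ^ α), isCompact_closedBall _ _,
        fun φ hsec hHol hφK y hy => ?_⟩
      have h1 : dist x' (φ y₀) ≤ diam K := dist_le_diam_of_mem hK.isBounded hx' hφK
      have h2 : infDist (φ y₀) (π ⁻¹' {y}) ≤ diam K + B := by
        calc infDist (φ y₀) (π ⁻¹' {y}) ≤ infDist x' (π ⁻¹' {y}) + dist (φ y₀) x' :=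
              infDist_le_infDist_add_dist
          _ ≤ diam K + B := by
              rw [dist_comm]; have := hBg y hy; linarith
      have h3 : dist (φ y₀) (φ y) ≤ L * (diam K + B) ^ α := by
        refine le_trans (hHol y₀ y) (mul_le_mul_of_nonneg_left ?_ hL0)
        exact Real.rpow_le_rpow infDist_nonneg h2 hα.1.le
      have := dist_triangle x' (φ y₀) (φ y)
      rw [mem_closedBall, dist_comm]
      linarith
  · -- second part
    intro x₀ hx₀ φ hsec hHol hφK y hy
    set S := π ⁻¹' {y}
    set F : X → ℝ := fun x => infDist x S ^ α with hF
    have hFc : Continuous F := (continuous_infDist_pt S).rpow_const fun x => Or.inr hα.1.le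
    obtain ⟨M, hM⟩ := (hK.image hFc).bddAbove
    have hbdd : BddAbove (Set.range fun x => ⨆ _ : x ∈ K, F x) := by
      refine ⟨max M 0, ?_⟩
      rintro z ⟨x, rfl⟩
      by_cases h : x ∈ K
      · show (⨆ _ : x ∈ K, F x) ≤ max M 0
        rw [ciSup_pos h]
        exact le_max_of_le_left (hM ⟨x, h, rfl⟩)
      · show (⨆ _ : x ∈ K, F x) ≤ max M 0
        have : IsEmpty (x ∈ K) := ⟨h⟩
        rw [Real.iSup_of_isEmpty]
        exact le_max_right _ _
    have hsup : F (φ y₀) ≤ ⨆ x ∈ K, F x := by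
      have := le_ciSup hbdd (φ y₀)
      rwa [ciSup_pos hφK] at this
    have h1 : dist x₀ (φ y₀) ≤ diam K := dist_le_diam_of_mem hK.isBounded hx₀ hφK
    have h3 : dist (φ y₀) (φ y) ≤ L * (⨆ x ∈ K, F x) :=
      le_trans (hHol y₀ y) (mul_le_mul_of_nonneg_left hsup hL0)
    have := dist_triangle x₀ (φ y₀) (φ y)
    linarith
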